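/- For every irrational real number α there exist infinitely many pairs of integers (n, m) with m > 0 such that |n/m - α| < 1/(√5 m²). -/

import Mathlib

namespace HurwitzAux

noncomputable def X (α : ℝ) : ℕ → ℝ
  | 0 => α
  | n+1 => (Int.fract (X α n))⁻¹

noncomputable def P (α : ℝ) : ℕ → ℤ
  | 0 => 1
  | 1 => ⌊α⌋
  | n+2 => ⌊X α (n+1)⌋ * P α (n+1) + P α n

noncomputable def Q (α : ℝ) : ℕ → ℤ
  | 0 => 0
  | 1 => 1
  | n+2 => ⌊X α (n+1)⌋ * Q α (n+1) + Q α n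

theorem irr_X {α : ℝ} (h : Irrational α) (n : ℕ) : Irrational (X α n) := by
  induction n with
  | zero => exact h
  | succ n ih =>
    have : Irrational (Int.fract (X α n)) := by
      rw [← Int.self_sub_floor]
      exact ih.sub_intCast _
    simpa [X] using this.inv

theorem fract_pos {α : ℝ} (h : Irrational α) (n : ℕ) : 0 < Int.fract (X α n) :=
  lt_of_le_of_ne (Int.fract_nonneg _) (by
    intro hh
    have h1 : X α n - ⌊X α n⌋ = 0 := by rw [Int.self_sub_floor, ← hh]
    exact (irr_X h n).ne_int ⌊X α n⌋ (by linarith))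

theorem one_lt_X {α : ℝ} (h : Irrational α) (n : ℕ) : 1 < X α (n+1) := by
  have h1 : Int.fract (X α n) < 1 := Int.fract_lt_one _
  have h0 : 0 < Int.fract (X α n) := fract_pos h n
  rw [X]
  exact (one_lt_inv₀ h0).mpr h1

theorem X_succ_eq {α : ℝ} (n : ℕ) : X α n = ⌊X α n⌋ + (X α (n+1))⁻¹ := by
  rw [show X α (n+1) = (Int.fract (X α n))⁻¹ from rfl, inv_inv, ← Int.self_sub_floor]
  ring

theorem one_le_floor_X {α : ℝ} (h : Irrational α) (n : ℕ) : 1 ≤ ⌊X α (n+1)⌋ :=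
  Int.le_floor.mpr (by exact_mod_cast (one_lt_X h n).le)

theorem Q_pos {α : ℝ} (h : Irrational α) (n : ℕ) : 1 ≤ Q α (n+1) := by
  induction n using Nat.strong_induction_on with
  | _ n ih =>
    match n with
    | 0 => exact le_refl 1
    | n+1 =>
      have h1 := ih n (by omega)
      have h2 := one_le_floor_X h n
      have h3 : 0 ≤ Q α n := by
        match n with
        | 0 => simp [Q]
        | k+1 => exact le_trans zero_le_one (ih k (by omega))
      rw [show Q α (n+2) = ⌊X α (n+1)⌋ * Q α (n+1) + Q α n from rfl]
      nlinarith

theorem Q_nonneg {α : ℝ} (h : Irrational α) (n : ℕ) : 0 ≤ Q α n := by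
  match n with
  | 0 => simp [Q]
  | k+1 => exact le_trans zero_le_one (Q_pos h k)

/-- key identity: α·(X_{n+1} Q_{n+1} + Q_n) = X_{n+1} P_{n+1} + P_n. -/
theorem key {α : ℝ} (h : Irrational α) (n : ℕ) :
    α * (X α (n+1) * Q α (n+1) + Q α n) = X α (n+1) * P α (n+1) + P α n := by
  induction n with
  | zero =>
    have h0 : Int.fract α ≠ 0 := ne_of_gt (fract_pos h 0)
    have h1 : X α 1 * Int.fract α = 1 := by
      rw [show X α 1 = (Int.fract (X α 0))⁻¹ from rfl,
          show X α 0 = α from rfl]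
      field_simp
    have h2 : Int.fract α = α - ⌊α⌋ := (Int.self_sub_floor α).symm
    rw [show X α 1 = X α 1 from rfl]
    simp only [show Q α 1 = 1 from rfl, show Q α 0 = 0 from rfl,
      show P α 1 = ⌊α⌋ from rfl, show P α 0 = 1 from rfl]
    push_cast
    linear_combination h1 - X α 1 * h2
  | succ n ih =>
    have hx : X α (n+1) = ⌊X α (n+1)⌋ + (X α (n+2))⁻¹ := X_succ_eq (n+1)
    have hne : X α (n+2) ≠ 0 := ne_of_gt (lt_trans one_pos (one_lt_X h (n+1)))
    have hinv : X α (n+2) * (X α (n+2))⁻¹ = 1 := mul_inv_cancel₀ hne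
    rw [hx] at ih
    rw [show Q α (n+2) = ⌊X α (n+1)⌋ * Q α (n+1) + Q α n from rfl,
        show P α (n+2) = ⌊X α (n+1)⌋ * P α (n+1) + P α n from rfl]
    push_cast
    linear_combination X α (n+2) * ih - (α * (Q α (n+1) : ℝ) - (P α (n+1) : ℝ)) * hinv

theorem det {α : ℝ} (n : ℕ) :
    P α (n+1) * Q α n - P α n * Q α (n+1) = (-1 : ℤ)^(n+1) := by
  induction n with
  | zero => simp [P, Q]
  | succ n ih =>
    rw [show Q α (n+2) = ⌊X α (n+1)⌋ * Q α (n+1) + Q α n from rfl,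
        show P α (n+2) = ⌊X α (n+1)⌋ * P α (n+1) + P α n from rfl]
    rw [pow_succ]
    ring_nf
    ring_nf at ih
    linarith

/-- the error identity -/
theorem errkey {α : ℝ} (h : Irrational α) (n : ℕ) :
    (α * Q α (n+1) - P α (n+1)) * (X α (n+1) * Q α (n+1) + Q α n) = (-1 : ℝ)^n := by
  have hk := key h n
  have hd := det (α := α) n
  have hd' : (P α (n+1) : ℝ) * Q α n - P α n * Q α (n+1) = (-1 : ℝ)^(n+1) := by
    exact_mod_cast congrArg (Int.cast : ℤ → ℝ) hd
  have e : (-1 : ℝ)^n = -((-1 : ℝ)^(n+1)) := by rw [pow_succ]; ring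
  rw [e, ← hd']
  linear_combination (Q α (n+1) : ℝ) * hk


/-- Positivity of the denominator factor. -/
theorem Dr_pos {α : ℝ} (h : Irrational α) (n : ℕ) :
    0 < X α (n+1) * Q α (n+1) + Q α n := by
  have h1 := one_lt_X h n
  have h2 : (1:ℝ) ≤ Q α (n+1) := by exact_mod_cast Q_pos h n
  have h3 : (0:ℝ) ≤ Q α n := by exact_mod_cast Q_nonneg h n
  nlinarith

/-- If index `n` is "good", the convergent `P/Q` satisfies the Hurwitz inequality. -/
theorem good_mem {α : ℝ} (h : Irrational α) (n : ℕ)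
    (hg : Real.sqrt 5 * Q α (n+1) < X α (n+1) * Q α (n+1) + Q α n) :
    |(P α (n+1) : ℝ) / (Q α (n+1) : ℝ) - α| < 1 / (Real.sqrt 5 * ((Q α (n+1):ℝ))^2) := by
  set q : ℝ := (Q α (n+1) : ℝ) with hqdef
  set p : ℝ := (P α (n+1) : ℝ) with hpdef
  set D : ℝ := X α (n+1) * Q α (n+1) + Q α n with hDdef
  have hq : 1 ≤ q := by rw [hqdef]; exact_mod_cast Q_pos h n
  have hq0 : 0 < q := lt_of_lt_of_le one_pos hq
  have hD : 0 < D := Dr_pos h n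
  have hs0 : 0 < Real.sqrt 5 := Real.sqrt_pos.mpr (by norm_num)
  have he := errkey h n
  have habs : |α * q - p| * D = 1 := by
    have h1 : |(α * q - p) * D| = |((-1:ℝ))^n| := by rw [he]
    rwa [abs_mul, abs_of_pos hD, abs_pow, abs_neg, abs_one, one_pow] at h1
  have hrw : p / q - α = (p - α * q) / q := by field_simp
  rw [hrw, abs_div, abs_of_pos hq0, abs_sub_comm]
  rw [div_lt_div_iff₀ hq0 (by positivity)]
  -- |p - αq| · (√5 q²) < 1 · q  ⟺  (1/D)·√5 q² < q  ⟺ √5 q < D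
  have habs' : |α * q - p| = 1 / D := by
    rw [eq_div_iff (ne_of_gt hD)]
    exact habs
  rw [habs']
  rw [div_mul_eq_mul_div, div_lt_iff₀ hD]
  calc 1 * (Real.sqrt 5 * q ^ 2) = (Real.sqrt 5 * q) * q := by ring
    _ < D * q := by
        apply mul_lt_mul_of_pos_right _ hq0
        exact hg
    _ = 1 * q * D := by ring

theorem Dr_eq {α : ℝ} (h : Irrational α) (n : ℕ) :
    X α (n+1) * Q α (n+1) + Q α n
      = (Q α (n+2) : ℝ) + (Q α (n+1) : ℝ) * (X α (n+2))⁻¹ := by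
  have hx : X α (n+1) = ⌊X α (n+1)⌋ + (X α (n+2))⁻¹ := X_succ_eq (n+1)
  rw [show Q α (n+2) = ⌊X α (n+1)⌋ * Q α (n+1) + Q α n from rfl]
  push_cast
  linear_combination (Q α (n+1) : ℝ) * hx

theorem sqrt5_ne_ratio {α : ℝ} (h : Irrational α) {a b : ℤ} (hb : b ≠ 0) :
    Real.sqrt 5 ≠ (a : ℝ) / (b : ℝ) := by
  intro hc
  have h5 : Irrational (Real.sqrt 5) := (by norm_num : Nat.Prime 5).irrational_sqrt
  have h2 : Irrational ((((a:ℚ)/(b:ℚ)) : ℚ) : ℝ) := by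
    push_cast
    rw [← hc]
    exact h5
  exact Rat.not_irrational _ h2

/-- Failures at `n` and `n+1` force `2·Q(n+2) < (1+√5)·Q(n+1)`. -/
theorem ratio_lt {α : ℝ} (h : Irrational α) (n : ℕ)
    (F1 : ¬ Real.sqrt 5 * Q α (n+1) < X α (n+1) * Q α (n+1) + Q α n)
    (F2 : ¬ Real.sqrt 5 * Q α (n+2) < X α (n+2) * Q α (n+2) + Q α (n+1)) :
    2 * (Q α (n+2) : ℝ) < (1 + Real.sqrt 5) * (Q α (n+1) : ℝ) := by
  push_neg at F1 F2
  set s : ℝ := Real.sqrt 5 with hsdef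
  have hs2 : s ^ 2 = 5 := Real.sq_sqrt (by norm_num)
  have hs0 : 0 ≤ s := Real.sqrt_nonneg 5
  have hsgt : 2 < s := by nlinarith
  set q1 : ℝ := (Q α (n+1) : ℝ) with hq1def
  set q2 : ℝ := (Q α (n+2) : ℝ) with hq2def
  have hq1 : 1 ≤ q1 := by rw [hq1def]; exact_mod_cast Q_pos h n
  have hq2 : 1 ≤ q2 := by rw [hq2def]; exact_mod_cast Q_pos h (n+1)
  have ht2 : 1 < X α (n+2) := one_lt_X h (n+1)
  have ht2' : 0 < X α (n+2) := lt_trans one_pos ht2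
  have hinv : X α (n+2) * (X α (n+2))⁻¹ = 1 := mul_inv_cancel₀ (ne_of_gt ht2')
  have hinvpos : 0 < (X α (n+2))⁻¹ := inv_pos.mpr ht2'
  -- F1 rewritten
  have F1' : q2 + q1 * (X α (n+2))⁻¹ ≤ s * q1 := by
    have := Dr_eq h n
    rw [this] at F1
    exact F1
  -- multiply the two failures
  have hA : 0 < q1 * (X α (n+2))⁻¹ := by positivity
  have hB : 0 < X α (n+2) * q2 := by positivity
  have key1 : q1 * q2 ≤ (s * q1 - q2) * (s * q2 - q1) := by
    have e1 : q1 * (X α (n+2))⁻¹ ≤ s * q1 - q2 := by linarith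
    have e2 : X α (n+2) * q2 ≤ s * q2 - q1 := by linarith
    have hmm : (q1 * (X α (n+2))⁻¹) * (X α (n+2) * q2) = q1 * q2 := by
      have : (q1 * (X α (n+2))⁻¹) * (X α (n+2) * q2)
          = q1 * q2 * (X α (n+2) * (X α (n+2))⁻¹) := by ring
      rw [this, hinv, mul_one]
    calc q1 * q2 = (q1 * (X α (n+2))⁻¹) * (X α (n+2) * q2) := hmm.symm
      _ ≤ (s * q1 - q2) * (s * q2 - q1) := by
          apply mul_le_mul e1 e2 (le_of_lt hB) (by linarith)
  -- hence q1² + q2² ≤ s q1 q2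
  have key2 : q1 ^ 2 + q2 ^ 2 ≤ s * (q1 * q2) := by nlinarith
  -- hence q2 ≤ (1+s)/2 q1
  have key3 : 2 * q2 ≤ (1 + s) * q1 := by
    by_contra hc
    push_neg at hc
    have h1 : 0 < 2 * q2 - (1 + s) * q1 := by linarith
    have h2 : 0 < 2 * q2 - (s - 1) * q1 := by nlinarith
    nlinarith [mul_pos h1 h2]
  -- strict by irrationality of √5
  rcases lt_or_eq_of_le key3 with hlt | heq
  · linarith
  · exfalso
    have hb : Q α (n+1) ≠ 0 := by
      have := Q_pos h n; omega
    apply sqrt5_ne_ratio h (a := 2 * Q α (n+2) - Q α (n+1)) hb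
    have hq1ne : q1 ≠ 0 := by positivity
    field_simp
    push_cast
    nlinarith [heq]

/-- Among any three consecutive indices, one is good. -/
theorem good_of_three {α : ℝ} (h : Irrational α) (n : ℕ) :
    (Real.sqrt 5 * Q α (n+1) < X α (n+1) * Q α (n+1) + Q α n) ∨
    (Real.sqrt 5 * Q α (n+2) < X α (n+2) * Q α (n+2) + Q α (n+1)) ∨
    (Real.sqrt 5 * Q α (n+3) < X α (n+3) * Q α (n+3) + Q α (n+2)) := by
  by_contra hc
  push_neg at hc
  obtain ⟨F1, F2, F3⟩ := hc
  have R1 := ratio_lt h n (by push_neg; exact F1) (by push_neg; exact F2)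
  have R2 := ratio_lt h (n+1) (by push_neg; exact F2)
    (by push_neg; exact F3)
  set s : ℝ := Real.sqrt 5 with hsdef
  have hs2 : s ^ 2 = 5 := Real.sq_sqrt (by norm_num)
  have hs0 : 0 ≤ s := Real.sqrt_nonneg 5
  set q1 : ℝ := (Q α (n+1) : ℝ) with hq1def
  set q2 : ℝ := (Q α (n+2) : ℝ) with hq2def
  set q3 : ℝ := (Q α (n+3) : ℝ) with hq3def
  have hq1 : 1 ≤ q1 := by rw [hq1def]; exact_mod_cast Q_pos h n
  have hq2 : 1 ≤ q2 := by rw [hq2def]; exact_mod_cast Q_pos h (n+1)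
  -- q3 ≥ q2 + q1
  have hA : 1 ≤ ⌊X α (n+2)⌋ := one_le_floor_X h (n+1)
  have hrec : Q α (n+3) = ⌊X α (n+2)⌋ * Q α (n+2) + Q α (n+1) := rfl
  have hq3ge : q2 + q1 ≤ q3 := by
    rw [hq3def, hrec]
    push_cast
    have h2 : (1:ℝ) ≤ (⌊X α (n+2)⌋ : ℝ) := by exact_mod_cast hA
    nlinarith
  nlinarith [R1, R2, hq3ge]

theorem Q_ge {α : ℝ} (h : Irrational α) (n : ℕ) : (n : ℤ) ≤ Q α (n+2) := by
  induction n with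
  | zero => simpa using le_trans (by norm_num) (Q_pos h 1)
  | succ n ih =>
    have h1 := Q_pos h (n+1)
    have h2 := one_le_floor_X h (n+1)
    have h3 := Q_pos h n
    rw [show Q α (n+3) = ⌊X α (n+2)⌋ * Q α (n+2) + Q α (n+1) from rfl]
    push_cast
    nlinarith

end HurwitzAux

open HurwitzAux in
/-- **Hurwitz.** For every irrational real `α` there are infinitely many
pairs of integers `(n, m)` with `m > 0` such that `|n/m - α| < 1/(√5 m²)`; equivalently,
infinitely many positive integers `m` admit such an `n`. -/
theorem hurwitz_approximation (α : ℝ) (hirr : Irrational α) :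
    {m : ℕ | 0 < m ∧ ∃ n : ℤ,
      |(n : ℝ) / (m : ℝ) - α| < 1 / (Real.sqrt 5 * (m : ℝ) ^ 2)}.Infinite := by
  apply Set.infinite_of_not_bddAbove
  rintro ⟨b, hb⟩
  obtain ⟨g, hgb, hgood⟩ :
      ∃ g, b + 2 ≤ g ∧
        Real.sqrt 5 * Q α (g+1) < X α (g+1) * Q α (g+1) + Q α g := by
    rcases good_of_three hirr (b+2) with h1 | h1 | h1
    · exact ⟨b+2, le_refl _, h1⟩
    · exact ⟨b+3, by omega, h1⟩
    · exact ⟨b+4, by omega, h1⟩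
  have hmem := good_mem hirr g hgood
  set m : ℕ := (Q α (g+1)).toNat with hmdef
  have hQnn : 0 ≤ Q α (g+1) := Q_nonneg hirr (g+1)
  have hQ1 : 1 ≤ Q α (g+1) := Q_pos hirr g
  have hcast : (m : ℝ) = ((Q α (g+1) : ℤ) : ℝ) := by
    rw [hmdef]
    exact_mod_cast congrArg (Int.cast : ℤ → ℝ) (Int.toNat_of_nonneg hQnn)
  have hmpos : 0 < m := by omega
  have hmemS : m ∈ {m : ℕ | 0 < m ∧ ∃ n : ℤ,
      |(n : ℝ) / (m : ℝ) - α| < 1 / (Real.sqrt 5 * (m : ℝ) ^ 2)} := by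
    refine ⟨hmpos, ⟨P α (g+1), ?_⟩⟩
    rw [hcast]
    exact hmem
  have hle : m ≤ b := hb hmemS
  -- but m is large
  have hQge : ((g - 1 : ℕ) : ℤ) ≤ Q α ((g-1)+2) := Q_ge hirr (g-1)
  have he : (g - 1) + 2 = g + 1 := by omega
  rw [he] at hQge
  omega
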